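/- Let Z : [B, ∞) → ℝ be a C² function satisfying Z'' = H·Z + K, where |H(x)| ≤ C e^{−ωx} and |K(x)| ≤ C e^{−ωx} for constants C, ω > 0, and suppose |Z(x)| ≤ C e^{ωx/2} on [B, ∞). Then there exist constants C₁, C₀ ∈ ℝ such that Z(x) = C₁x + C₀ + O(e^{−ωx/2}) as x → ∞. -/

import Mathlib

open Real

open Set Filter MeasureTheory Topology in
lemma key_decay {δ D a : ℝ} (hδ : 0 < δ) (_hD : 0 ≤ D) {F f : ℝ → ℝ}
    (hF : ∀ x ∈ Set.Ici a, HasDerivAt F (f x) x)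
    (hfc : ContinuousOn f (Set.Ici a))
    (hfb : ∀ x ∈ Set.Ici a, |f x| ≤ D * Real.exp (-δ * x)) :
    ∃ L : ℝ, Filter.Tendsto F Filter.atTop (nhds L) ∧
      ∀ x ∈ Set.Ici a, |F x - L| ≤ (D / δ) * Real.exp (-δ * x) := by
  have hint : IntegrableOn f (Ioi a) := by
    apply integrable_of_isBigO_exp_neg hδ hfc
    apply Asymptotics.IsBigO.of_bound D
    filter_upwards [Filter.Ici_mem_atTop a] with x hx
    simpa [Real.norm_eq_abs, abs_of_pos (Real.exp_pos _)] using hfb x hx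
  have hlim : Tendsto F atTop (𝓝 (limUnder atTop F)) :=
    tendsto_limUnder_of_hasDerivAt_of_integrableOn_Ioi
      (fun x hx => hF x (Set.mem_Ici.mpr (le_of_lt (Set.mem_Ioi.mp hx)))) hint
  refine ⟨limUnder atTop F, hlim, fun x hx => ?_⟩
  have h1 : ∫ t in Ioi x, f t = limUnder atTop F - F x :=
    integral_Ioi_of_hasDerivAt_of_tendsto' (fun y hy => hF y (Set.mem_Ici.mpr (le_trans (Set.mem_Ici.mp hx) (Set.mem_Ici.mp hy))))
      (hint.mono_set (Ioi_subset_Ioi hx)) hlim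
  have h2 : ∫ t in Ioi x, D * Real.exp (-δ * t) = (D / δ) * Real.exp (-δ * x) := by
    have hderiv : ∀ y ∈ Ici x, HasDerivAt (fun t => -(D / δ) * Real.exp (-δ * t))
        (D * Real.exp (-δ * y)) y := by
      intro y _
      have h := (((hasDerivAt_id y).const_mul (-δ)).exp).const_mul (-(D / δ))
      refine h.congr_deriv ?_
      simp only [id]
      field_simp
    have htend : Tendsto (fun t => -(D / δ) * Real.exp (-δ * t)) atTop (𝓝 0) := by
      have h0 : Tendsto (fun t : ℝ => Real.exp (-δ * t)) atTop (𝓝 0) :=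
        Real.tendsto_exp_atBot.comp (tendsto_id.const_mul_atTop_of_neg (by linarith))
      simpa using h0.const_mul (-(D / δ))
    have := integral_Ioi_of_hasDerivAt_of_tendsto' hderiv
      ((exp_neg_integrableOn_Ioi x hδ).const_mul D) htend
    rw [this]; ring
  have h3 : |∫ t in Ioi x, f t| ≤ ∫ t in Ioi x, D * Real.exp (-δ * t) := by
    rw [← Real.norm_eq_abs]
    apply norm_integral_le_of_norm_le ((exp_neg_integrableOn_Ioi x hδ).const_mul D)
    filter_upwards [ae_restrict_mem measurableSet_Ioi] with t ht
    exact hfb t (Set.mem_Ici.mpr (le_trans (Set.mem_Ici.mp hx) (le_of_lt (Set.mem_Ioi.mp ht))))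
  rw [h2] at h3
  calc |F x - limUnder atTop F| = |∫ t in Ioi x, f t| := by rw [h1, abs_sub_comm]
    _ ≤ (D / δ) * Real.exp (-δ * x) := h3

theorem linear_plus_decay (B C ω : ℝ) (hC : 0 < C) (hω : 0 < ω)
    (Z H K : ℝ → ℝ)
    (hZ : ContDiffOn ℝ 2 Z (Set.Ici B))
    (hode : ∀ x, B ≤ x → deriv (deriv Z) x = H x * Z x + K x)
    (hH : ∀ x, B ≤ x → |H x| ≤ C * Real.exp (-ω * x))
    (hK : ∀ x, B ≤ x → |K x| ≤ C * Real.exp (-ω * x))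
    (hZbd : ∀ x, B ≤ x → |Z x| ≤ C * Real.exp (ω * x / 2)) :
    ∃ C₁ C₀ M : ℝ, ∀ x, B ≤ x →
      |Z x - (C₁ * x + C₀)| ≤ M * Real.exp (-ω * x / 2) := by
  set δ := ω / 2 with hδdef
  have hδ : 0 < δ := by positivity
  set D := C ^ 2 + C * Real.exp (-ω * B / 2) with hDdef
  have hD : 0 ≤ D := by positivity
  -- regularity on the open set Ioi B
  have hZo : ContDiffOn ℝ 2 Z (Set.Ioi B) := hZ.mono Set.Ioi_subset_Ici_self
  have hZ1 : ∀ x ∈ Set.Ioi B, HasDerivAt Z (deriv Z x) x := by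
    intro x hx
    exact ((hZo.differentiableOn (by norm_num)).differentiableAt
      (isOpen_Ioi.mem_nhds hx)).hasDerivAt
  have hφc : ContDiffOn ℝ 1 (deriv Z) (Set.Ioi B) :=
    hZo.deriv_of_isOpen isOpen_Ioi (by norm_num)
  have hφ1 : ∀ x ∈ Set.Ioi B, HasDerivAt (deriv Z) (deriv (deriv Z) x) x := by
    intro x hx
    exact ((hφc.differentiableOn (by norm_num)).differentiableAt
      (isOpen_Ioi.mem_nhds hx)).hasDerivAt
  have hgc : ContinuousOn (deriv (deriv Z)) (Set.Ioi B) :=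
    hφc.continuousOn_deriv_of_isOpen isOpen_Ioi (by norm_num)
  -- bound on Z''
  have hgb : ∀ x, B ≤ x → |deriv (deriv Z) x| ≤ D * Real.exp (-δ * x) := by
    intro x hx
    rw [hode x hx]
    have h1 : |H x * Z x| ≤ C ^ 2 * Real.exp (-δ * x) := by
      rw [abs_mul]
      calc |H x| * |Z x| ≤ (C * Real.exp (-ω * x)) * (C * Real.exp (ω * x / 2)) := by
            apply mul_le_mul (hH x hx) (hZbd x hx) (abs_nonneg _) (by positivity)
        _ = C ^ 2 * Real.exp (-δ * x) := by
            rw [show (C * Real.exp (-ω * x)) * (C * Real.exp (ω * x / 2))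
              = C ^ 2 * (Real.exp (-ω * x) * Real.exp (ω * x / 2)) by ring, ← Real.exp_add]
            congr 1
            rw [hδdef]; ring
    have h2 : |K x| ≤ C * Real.exp (-ω * B / 2) * Real.exp (-δ * x) := by
      calc |K x| ≤ C * Real.exp (-ω * x) := hK x hx
        _ ≤ C * Real.exp (-ω * B / 2) * Real.exp (-δ * x) := by
            rw [mul_assoc, ← Real.exp_add]
            apply mul_le_mul_of_nonneg_left _ hC.le
            apply Real.exp_le_exp.2
            rw [hδdef]
            nlinarith [hω]
    calc |H x * Z x + K x| ≤ |H x * Z x| + |K x| := abs_add_le _ _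
      _ ≤ C ^ 2 * Real.exp (-δ * x) + C * Real.exp (-ω * B / 2) * Real.exp (-δ * x) := by
          linarith
      _ = D * Real.exp (-δ * x) := by rw [hDdef]; ring
  have hsub : Set.Ici (B + 1) ⊆ Set.Ioi B := fun y hy => by
    simp only [Set.mem_Ici] at hy; simp only [Set.mem_Ioi]; linarith
  -- first application: deriv Z → C₁
  obtain ⟨C₁, -, h₁⟩ := key_decay hδ hD
    (F := deriv Z) (f := deriv (deriv Z)) (a := B + 1)
    (fun x hx => hφ1 x (hsub hx)) (hgc.mono hsub)
    (fun x hx => hgb x (by have := hsub hx; simp only [Set.mem_Ioi] at this; linarith))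
  -- second application: Z x - C₁ x → C₀
  have hD' : 0 ≤ D / δ := by positivity
  obtain ⟨C₀, -, h₂⟩ := key_decay hδ hD'
    (F := fun x => Z x - C₁ * x) (f := fun x => deriv Z x - C₁) (a := B + 1)
    (fun x hx => by
      have hid : HasDerivAt (fun y : ℝ => C₁ * y) C₁ x := by
        simpa using (hasDerivAt_id x).const_mul C₁
      exact (hZ1 x (hsub hx)).sub hid)
    (ContinuousOn.sub (fun x hx => (hφ1 x (hsub hx)).continuousAt.continuousWithinAt)
      continuousOn_const)
    h₁
  -- bound on the compact piece [B, B+1]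
  have hZcont : ContinuousOn Z (Set.Ici B) := hZ.continuousOn
  have hmc : ContinuousOn (fun x => (Z x - (C₁ * x + C₀)) * Real.exp (δ * x))
      (Set.Icc B (B + 1)) := by
    apply ContinuousOn.mul
    · exact ((hZcont.mono (Set.Icc_subset_Ici_self)).sub (by fun_prop))
    · fun_prop
  obtain ⟨M₂, hM₂⟩ := (isCompact_Icc (a := B) (b := B + 1)).exists_bound_of_continuousOn hmc
  refine ⟨C₁, C₀, max (D / δ / δ) M₂, fun x hx => ?_⟩
  have hexp : -ω * x / 2 = -δ * x := by rw [hδdef]; ring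
  rw [hexp]
  rcases le_or_gt (B + 1) x with hcase | hcase
  · have h5 : |Z x - C₁ * x - C₀| ≤ (D / δ / δ) * Real.exp (-δ * x) := h₂ x hcase
    have h6 : Z x - C₁ * x - C₀ = Z x - (C₁ * x + C₀) := by ring
    rw [h6] at h5
    calc |Z x - (C₁ * x + C₀)| ≤ (D / δ / δ) * Real.exp (-δ * x) := h5
      _ ≤ max (D / δ / δ) M₂ * Real.exp (-δ * x) := by
          apply mul_le_mul_of_nonneg_right (le_max_left _ _) (Real.exp_pos _).le
  · have hmem : x ∈ Set.Icc B (B + 1) := ⟨hx, hcase.le⟩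
    have := hM₂ x hmem
    rw [Real.norm_eq_abs, abs_mul, abs_of_pos (Real.exp_pos _)] at this
    have hb : |Z x - (C₁ * x + C₀)| ≤ M₂ * Real.exp (-δ * x) := by
      have h4 : |Z x - (C₁ * x + C₀)|
          = |Z x - (C₁ * x + C₀)| * Real.exp (δ * x) * Real.exp (-δ * x) := by
        rw [mul_assoc, ← Real.exp_add, show δ * x + -δ * x = 0 by ring,
          Real.exp_zero, mul_one]
      rw [h4]
      apply mul_le_mul_of_nonneg_right _ (Real.exp_pos _).le
      calc |Z x - (C₁ * x + C₀)| * Real.exp (δ * x)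
          = |(Z x - (C₁ * x + C₀)) * Real.exp (δ * x)| := by
            rw [abs_mul, abs_of_pos (Real.exp_pos _)]
        _ ≤ M₂ := by rw [← Real.norm_eq_abs]; exact hM₂ x hmem
    calc |Z x - (C₁ * x + C₀)| ≤ M₂ * Real.exp (-δ * x) := hb
      _ ≤ max (D / δ / δ) M₂ * Real.exp (-δ * x) :=
          mul_le_mul_of_nonneg_right (le_max_right _ _) (Real.exp_pos _).le
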